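/- A vector x ∈ ℝⁿ is the mean score sequence of a random Coxeter tournament of type Cₙ on the complete signed graph (i.e., there exist probabilities p⁻_{ij} ∈ [0,1] with p⁻_{ij} = 1 - p⁻_{ji} for each unordered pair i≠j, probabilities p⁺_{ij} = p⁺_{ji} ∈ [0,1] for each unordered pair i≠j, and probabilities pℓ_i ∈ [0,1] for each i, such that x_i = Σ_{j≠i}(p⁻_{ij} - 1/2) + Σ_{j≠i}(p⁺_{ij} - 1/2) + 2(pℓ_i - 1/2) for all i) if and only if the vector |x| = (|x₁|,…,|xₙ|) is weakly sub-majorized by ρ = (1,2,…,n). -/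

import Mathlib

open Finset

/-- `u` is weakly sub-majorized by `v`: for every `k`, the sum of the `k` largest
entries of `u` is at most the sum of the `k` largest entries of `v`. -/
def WeakSubMaj {α β : Type*} [Fintype α] [Fintype β] (u : α → ℝ) (v : β → ℝ) : Prop :=
  ∀ S : Finset α, ∃ T : Finset β, T.card = S.card ∧ ∑ i ∈ S, u i ≤ ∑ j ∈ T, v j

/-- `x` is the mean score sequence of a random Coxeter tournament of type `Cₙ`
on the complete signed graph on `n` vertices. -/
def IsMeanScoreSeqC (n : ℕ) (x : Fin n → ℝ) : Prop :=
  ∃ (pm pp : Fin n → Fin n → ℝ) (pl : Fin n → ℝ),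
    (∀ i j, 0 ≤ pm i j ∧ pm i j ≤ 1) ∧
    (∀ i j, i ≠ j → pm i j = 1 - pm j i) ∧
    (∀ i j, 0 ≤ pp i j ∧ pp i j ≤ 1) ∧
    (∀ i j, pp i j = pp j i) ∧
    (∀ i, 0 ≤ pl i ∧ pl i ≤ 1) ∧
    (∀ i, x i = ∑ j ∈ univ.erase i, (pm i j - 1/2)
              + ∑ j ∈ univ.erase i, (pp i j - 1/2)
              + 2 * (pl i - 1/2))


lemma gaussR (k : ℕ) : (∑ i ∈ range k, (i:ℝ)) = k * (k-1) / 2 := by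
  induction k with
  | zero => simp
  | succ k ih => rw [Finset.sum_range_succ, ih]; push_cast; ring

lemma sumC (n m : ℕ) : (∑ k ∈ range m, ((n:ℝ) - k)) = m * n - m * (m-1)/2 := by
  rw [Finset.sum_sub_distrib, Finset.sum_const, gaussR]
  simp only [nsmul_eq_mul, Finset.card_range]
  try ring

lemma sum_T_le_gen {n : ℕ} (T : Finset (Fin n)) :
    ∀ N : ℕ, (∀ j ∈ T, (j:ℕ) < N) →
      ∑ j ∈ T, ((j : ℝ) + 1) ≤ T.card * N - T.card * (T.card - 1) / 2 := by
  induction T using Finset.induction_on_max with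
  | empty => intro N _; simp
  | insert a s hlt ih =>
    intro N hN
    have ha : a ∉ s := fun h => lt_irrefl a (hlt a h)
    have hsa : ∀ j ∈ s, (j:ℕ) < (a:ℕ) := fun j hj => hlt j hj
    have hc : s.card ≤ (a:ℕ) := by
      have : s.card ≤ (Finset.range (a:ℕ)).card := by
        refine Finset.card_le_card_of_injOn (fun j => (j:ℕ)) ?_ ?_
        · intro j hj; simpa using hsa j hj
        · intro j1 _ j2 _ h; exact Fin.val_injective h
      simpa using this
    have haN : (a:ℕ) < N := hN a (Finset.mem_insert_self a s)
    have ihs := ih (a:ℕ) hsa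
    rw [Finset.sum_insert ha, Finset.card_insert_of_notMem ha]
    have h1 : ((s.card : ℕ) : ℝ) ≤ (a:ℕ) := by exact_mod_cast hc
    have h2 : ((a:ℕ) : ℝ) + 1 ≤ N := by exact_mod_cast haN
    push_cast
    push_cast at ihs
    nlinarith [ihs, h1, h2]

lemma sum_T_le {n : ℕ} (T : Finset (Fin n)) :
    ∑ j ∈ T, ((j : ℝ) + 1) ≤ T.card * n - T.card * (T.card - 1) / 2 :=
  sum_T_le_gen T n (fun j _ => j.isLt)

lemma top_T {n k : ℕ} (hk : k ≤ n) :
    ∃ T : Finset (Fin n), T.card = k ∧ ∑ j ∈ T, ((j : ℝ) + 1) = k * n - k * (k-1)/2 := by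
  rcases Nat.eq_zero_or_pos k with rfl | hk0
  · exact ⟨∅, by simp⟩
  have hn0 : 0 < n := lt_of_lt_of_le hk0 hk
  refine ⟨(Finset.range k).image (fun a => (⟨n - 1 - min a (n-1), by omega⟩ : Fin n)), ?_, ?_⟩
  · rw [Finset.card_image_of_injOn, Finset.card_range]
    intro a ha b hb h
    simp only [Finset.mem_range, Finset.mem_coe] at ha hb
    have := Fin.mk.injEq .. ▸ h
    have h' : n - 1 - min a (n-1) = n - 1 - min b (n-1) := Fin.val_eq_of_eq h
    omega
  · rw [Finset.sum_image]
    · have : ∀ a ∈ Finset.range k, (((⟨n - 1 - min a (n-1), by omega⟩ : Fin n) : ℕ) : ℝ) + 1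
          = (n:ℝ) - a := by
        intro a ha
        simp only [Finset.mem_range] at ha
        have h1 : min a (n-1) = a := by omega
        have h2 : ((n - 1 - a : ℕ) : ℝ) = (n:ℝ) - 1 - a := by
          have : a ≤ n - 1 := by omega
          push_cast [Nat.cast_sub this, Nat.cast_sub (by omega : 1 ≤ n)]
          ring
        simp only [h1, h2]; ring
      rw [Finset.sum_congr rfl this, sumC]
    · intro a ha b hb h
      simp only [Finset.mem_range, Finset.mem_coe] at ha hb
      have h' : n - 1 - min a (n-1) = n - 1 - min b (n-1) := Fin.val_eq_of_eq h
      omega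

-- Abel summation comparison
lemma abel_compare : ∀ (N : ℕ) (A B C : ℕ → ℝ),
    (∀ i j, i ≤ j → j < N → A j ≤ A i) →
    (∀ k, k < N → 0 ≤ A k) →
    (∀ m, m ≤ N → ∑ k ∈ range m, B k ≤ ∑ k ∈ range m, C k) →
    ∑ k ∈ range N, A k * B k ≤ ∑ k ∈ range N, A k * C k := by
  intro N
  induction N with
  | zero => intro A B C _ _ _; simp
  | succ N ih =>
    intro A B C hmono hpos hBC
    have h0 : 0 ≤ A N := hpos N (Nat.lt_succ_self N)
    set A' : ℕ → ℝ := fun k => A k - A N with hA'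
    have ih' := ih A' B C
      (fun i j hij hj => by
        simp only [hA']
        have := hmono i j hij (lt_trans hj (Nat.lt_succ_self N)); linarith)
      (fun k hk => by
        simp only [hA']
        have := hmono k N (le_of_lt hk) (Nat.lt_succ_self N); linarith)
      (fun m hm => hBC m (le_trans hm (Nat.le_succ N)))
    have hid : ∀ D : ℕ → ℝ, ∑ k ∈ range (N+1), A k * D k
        = (∑ k ∈ range N, A' k * D k) + A N * ∑ k ∈ range (N+1), D k := by
      intro D
      calc ∑ k ∈ range (N+1), A k * D k
          = ∑ k ∈ range N, A k * D k + A N * D N := Finset.sum_range_succ _ N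
        _ = (∑ k ∈ range N, (A' k * D k + A N * D k)) + A N * D N := by
            refine congrArg (· + (A N * D N)) (Finset.sum_congr rfl fun k _ => ?_)
            simp only [hA']; ring
        _ = (∑ k ∈ range N, A' k * D k) + ((∑ k ∈ range N, A N * D k) + A N * D N) := by
            rw [Finset.sum_add_distrib]; ring
        _ = (∑ k ∈ range N, A' k * D k) + A N * ∑ k ∈ range (N+1), D k := by
            rw [Finset.sum_range_succ, mul_add, Finset.mul_sum]
    rw [hid B, hid C]
    have h2 : A N * ∑ k ∈ range (N+1), B k ≤ A N * ∑ k ∈ range (N+1), C k :=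
      mul_le_mul_of_nonneg_left (hBC (N+1) le_rfl) h0
    linarith [ih']

section Conv
variable (n : ℕ)

abbrev Espace := ((Fin n → Fin n → ℝ) × (Fin n → ℝ))

def InK (m : Fin n → Fin n → ℝ) (e : Fin n → ℝ) : Prop :=
  (∀ i, m i i = 0) ∧ (∀ i j, i ≠ j → |m i j| + |m j i| ≤ 1) ∧ (∀ i, |e i| ≤ 1)

def Kset : Set (Espace n) := {p | InK n p.1 p.2}

def Phi : Espace n →ₗ[ℝ] (Fin n → ℝ) where
  toFun := fun p i => (∑ j ∈ univ.erase i, p.1 i j) + p.2 i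
  map_add' := by
    intro p q
    funext i
    show (∑ j ∈ univ.erase i, (p.1 i j + q.1 i j)) + (p.2 i + q.2 i) = _
    rw [Finset.sum_add_distrib]
    show _ = ((∑ j ∈ univ.erase i, p.1 i j) + p.2 i) + ((∑ j ∈ univ.erase i, q.1 i j) + q.2 i)
    ring
  map_smul' := by
    intro c p
    funext i
    show (∑ j ∈ univ.erase i, c * p.1 i j) + c * p.2 i = _
    rw [← Finset.mul_sum]
    show _ = c * ((∑ j ∈ univ.erase i, p.1 i j) + p.2 i)
    ring

lemma Kset_convex : Convex ℝ (Kset n) := by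
  rintro p hp q hq a b ha hb hab
  obtain ⟨hp1, hp2, hp3⟩ := hp
  obtain ⟨hq1, hq2, hq3⟩ := hq
  refine ⟨fun i => ?_, fun i j hij => ?_, fun i => ?_⟩
  · show a * p.1 i i + b * q.1 i i = 0
    rw [hp1 i, hq1 i]; ring
  · show |a * p.1 i j + b * q.1 i j| + |a * p.1 j i + b * q.1 j i| ≤ 1
    have e1 : |a * p.1 i j + b * q.1 i j| ≤ a * |p.1 i j| + b * |q.1 i j| := by
      calc |a * p.1 i j + b * q.1 i j| ≤ |a * p.1 i j| + |b * q.1 i j| := abs_add_le _ _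
      _ = a * |p.1 i j| + b * |q.1 i j| := by
          rw [abs_mul, abs_mul, abs_of_nonneg ha, abs_of_nonneg hb]
    have e2 : |a * p.1 j i + b * q.1 j i| ≤ a * |p.1 j i| + b * |q.1 j i| := by
      calc |a * p.1 j i + b * q.1 j i| ≤ |a * p.1 j i| + |b * q.1 j i| := abs_add_le _ _
      _ = a * |p.1 j i| + b * |q.1 j i| := by
          rw [abs_mul, abs_mul, abs_of_nonneg ha, abs_of_nonneg hb]
    have e3 := hp2 i j hij
    have e4 := hq2 i j hij
    nlinarith
  · show |a * p.2 i + b * q.2 i| ≤ 1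
    calc |a * p.2 i + b * q.2 i| ≤ |a * p.2 i| + |b * q.2 i| := abs_add_le _ _
    _ = a * |p.2 i| + b * |q.2 i| := by
        rw [abs_mul, abs_mul, abs_of_nonneg ha, abs_of_nonneg hb]
    _ ≤ a * 1 + b * 1 := by
        have := hp3 i; have := hq3 i
        have h1 : a * |p.2 i| ≤ a * 1 := mul_le_mul_of_nonneg_left (hp3 i) ha
        have h2 : b * |q.2 i| ≤ b * 1 := mul_le_mul_of_nonneg_left (hq3 i) hb
        linarith
    _ = 1 := by rw [mul_one, mul_one, hab]

lemma cont1 (i j : Fin n) : Continuous (fun p : Espace n => p.1 i j) :=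
  (continuous_apply j).comp ((continuous_apply i).comp continuous_fst)

lemma cont2 (i : Fin n) : Continuous (fun p : Espace n => p.2 i) :=
  (continuous_apply i).comp continuous_snd

lemma Kset_closed : IsClosed (Kset n) := by
  have hrw : Kset n = (⋂ i : Fin n, {p : Espace n | p.1 i i = 0})
      ∩ ((⋂ i : Fin n, ⋂ j : Fin n, {p : Espace n | i ≠ j → |p.1 i j| + |p.1 j i| ≤ 1})
        ∩ ⋂ i : Fin n, {p : Espace n | |p.2 i| ≤ 1}) := by
    ext p
    simp only [Kset, InK, Set.mem_setOf_eq, Set.mem_inter_iff, Set.mem_iInter]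
  rw [hrw]
  refine IsClosed.inter (isClosed_iInter fun i => isClosed_eq (cont1 n i i) continuous_const)
    (IsClosed.inter (isClosed_iInter fun i => isClosed_iInter fun j => ?_)
      (isClosed_iInter fun i => isClosed_le (cont2 n i).abs continuous_const))
  by_cases hij : i = j
  · have : {p : Espace n | i ≠ j → |p.1 i j| + |p.1 j i| ≤ 1} = Set.univ := by
      ext p; simp [hij]
    rw [this]; exact isClosed_univ
  · have : {p : Espace n | i ≠ j → |p.1 i j| + |p.1 j i| ≤ 1}
        = {p : Espace n | |p.1 i j| + |p.1 j i| ≤ 1} := by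
      ext p; simp [hij]
    rw [this]
    exact isClosed_le ((cont1 n i j).abs.add (cont1 n j i).abs) continuous_const

lemma Kset_compact : IsCompact (Kset n) := by
  refine Metric.isCompact_of_isClosed_isBounded (Kset_closed n) ?_
  refine (Metric.isBounded_closedBall (x := (0 : Espace n)) (r := 1)).subset ?_
  rintro p ⟨h1, h2, h3⟩
  rw [Metric.mem_closedBall, dist_zero_right]
  rw [Prod.norm_def]
  refine max_le ?_ ?_
  · rw [pi_norm_le_iff_of_nonneg (by norm_num)]
    intro i
    rw [pi_norm_le_iff_of_nonneg (by norm_num)]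
    intro j
    rw [Real.norm_eq_abs]
    by_cases hij : i = j
    · subst hij; rw [h1 i]; norm_num
    · have := h2 i j hij
      have := abs_nonneg (p.1 j i)
      linarith
  · rw [pi_norm_le_iff_of_nonneg (by norm_num)]
    intro i
    rw [Real.norm_eq_abs]
    exact h3 i

end Conv


lemma msc_iff_K (n : ℕ) (x : Fin n → ℝ) :
    IsMeanScoreSeqC n x ↔ ∃ m e, InK n m e ∧
      ∀ i, x i = (∑ j ∈ univ.erase i, m i j) + e i := by
  constructor
  · rintro ⟨pm, pp, pl, hm01, hmanti, hp01, hpsymm, hl01, hx⟩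
    refine ⟨fun i j => if i = j then 0 else (pm i j - 1/2) + (pp i j - 1/2),
      fun i => 2 * (pl i - 1/2), ⟨fun i => by simp, ?_, ?_⟩, ?_⟩
    · intro i j hij
      simp only [if_neg hij, if_neg (Ne.symm hij)]
      have h1 := hm01 i j; have h2 := hm01 j i
      have h3 := hp01 i j
      have h4 : pm i j = 1 - pm j i := hmanti i j hij
      have h5 : pp j i = pp i j := hpsymm j i
      rw [h5]
      rcases abs_cases ((pm i j - 1/2) + (pp i j - 1/2)) with ⟨e1, _⟩ | ⟨e1, _⟩ <;>
        rcases abs_cases ((pm j i - 1/2) + (pp i j - 1/2)) with ⟨e2, _⟩ | ⟨e2, _⟩ <;>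
        rw [e1, e2] <;> linarith
    · intro i
      have := hl01 i
      rw [abs_le]; constructor <;> linarith
    · intro i
      rw [hx i]
      have : ∀ j ∈ univ.erase i,
          (if i = j then 0 else (pm i j - 1/2) + (pp i j - 1/2))
            = (pm i j - 1/2) + (pp i j - 1/2) := by
        intro j hj
        rw [if_neg (Ne.symm (Finset.ne_of_mem_erase hj))]
      rw [Finset.sum_congr rfl this, Finset.sum_add_distrib]
      try ring
  · rintro ⟨m, e, ⟨hdiag, hoff, he⟩, hx⟩
    refine ⟨fun i j => 1/2 + (m i j - m j i)/2, fun i j => 1/2 + (m i j + m j i)/2,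
      fun i => 1/2 + e i / 2, ?_, ?_, ?_, ?_, ?_, ?_⟩
    · intro i j
      rcases eq_or_ne i j with rfl | hij
      · norm_num
      · have h := hoff i j hij
        have h1 := abs_nonneg (m i j); have h2 := abs_nonneg (m j i)
        have h3 := le_abs_self (m i j); have h4 := neg_abs_le (m i j)
        have h5 := le_abs_self (m j i); have h6 := neg_abs_le (m j i)
        constructor <;> linarith
    · intro i j _; ring
    · intro i j
      rcases eq_or_ne i j with rfl | hij
      · beta_reduce; rw [hdiag i]; norm_num
      · have h := hoff i j hij
        have h1 := abs_nonneg (m i j); have h2 := abs_nonneg (m j i)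
        have h3 := le_abs_self (m i j); have h4 := neg_abs_le (m i j)
        have h5 := le_abs_self (m j i); have h6 := neg_abs_le (m j i)
        constructor <;> linarith
    · intro i j; ring
    · intro i
      have h := he i
      have h3 := le_abs_self (e i); have h4 := neg_abs_le (e i)
      constructor <;> linarith
    · intro i
      beta_reduce
      rw [hx i, ← Finset.sum_add_distrib]
      have h1 : ∀ j ∈ univ.erase i,
          ((1:ℝ)/2 + (m i j - m j i)/2 - 1/2) + (1/2 + (m i j + m j i)/2 - 1/2) = m i j := by
        intro j _; ring
      rw [Finset.sum_congr rfl h1]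
      ring

lemma sum_abs_le {n : ℕ} {m : Fin n → Fin n → ℝ} {e : Fin n → ℝ} {x : Fin n → ℝ}
    (hK : InK n m e) (hx : ∀ i, x i = (∑ j ∈ univ.erase i, m i j) + e i)
    (S : Finset (Fin n)) :
    ∑ i ∈ S, |x i| ≤ S.card * n - S.card * (S.card - 1) / 2 := by
  obtain ⟨hdiag, hoff, he⟩ := hK
  set ε : Fin n → ℝ := fun i => if 0 ≤ x i then 1 else -1 with hε
  have hεabs : ∀ i, |ε i| = 1 := by
    intro i; simp only [hε]; split_ifs <;> simp
  have habs : ∀ i, |x i| = ε i * x i := by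
    intro i; simp only [hε]; split_ifs with h
    · rw [abs_of_nonneg h]; ring
    · rw [abs_of_neg (lt_of_not_ge h)]; ring
  have hbound : ∀ i j, ε i * m i j ≤ |m i j| := by
    intro i j
    calc ε i * m i j ≤ |ε i * m i j| := le_abs_self _
    _ = |m i j| := by rw [abs_mul, hεabs]; ring
  have hsplit : ∀ i ∈ S, (∑ j ∈ univ.erase i, ε i * m i j)
      = (∑ j ∈ S.erase i, ε i * m i j) + ∑ j ∈ univ \ S, ε i * m i j := by
    intro i hi
    rw [← Finset.sum_union]
    · congr 1
      ext j
      simp only [Finset.mem_erase, Finset.mem_union, Finset.mem_sdiff, Finset.mem_univ,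
        true_and, and_true]
      constructor
      · intro hj
        by_cases hjS : j ∈ S
        · exact Or.inl ⟨hj, hjS⟩
        · exact Or.inr hjS
      · rintro (⟨hj, _⟩ | hj)
        · exact hj
        · rintro rfl; exact hj hi
    · rw [Finset.disjoint_left]
      intro j hj1 hj2
      exact (Finset.mem_sdiff.mp hj2).2 (Finset.mem_of_mem_erase hj1)
  have key : ∑ i ∈ S, |x i| = (∑ i ∈ S, ∑ j ∈ S.erase i, ε i * m i j)
      + (∑ i ∈ S, ∑ j ∈ univ \ S, ε i * m i j) + ∑ i ∈ S, ε i * e i := by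
    rw [← Finset.sum_add_distrib, ← Finset.sum_add_distrib]
    refine Finset.sum_congr rfl fun i hi => ?_
    rw [habs i, hx i, ← hsplit i hi, ← Finset.mul_sum]
    ring
  have hW : (∑ i ∈ S, ∑ j ∈ S.erase i, ε i * m i j) ≤ S.card * (S.card - 1) / 2 := by
    have hswap : (∑ i ∈ S, ∑ j ∈ S.erase i, ε j * m j i)
        = ∑ i ∈ S, ∑ j ∈ S.erase i, ε i * m i j := by
      refine Finset.sum_comm' ?_
      intro i j
      constructor
      · rintro ⟨h1, h2⟩
        rw [Finset.mem_erase] at h2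
        exact ⟨Finset.mem_erase.mpr ⟨Ne.symm h2.1, h1⟩, h2.2⟩
      · rintro ⟨h1, h2⟩
        rw [Finset.mem_erase] at h1
        exact ⟨h1.2, Finset.mem_erase.mpr ⟨Ne.symm h1.1, h2⟩⟩
    have h2 : 2 * (∑ i ∈ S, ∑ j ∈ S.erase i, ε i * m i j)
        = ∑ i ∈ S, ∑ j ∈ S.erase i, (ε i * m i j + ε j * m j i) := by
      rw [Finset.sum_congr rfl fun i _ => Finset.sum_add_distrib,
        Finset.sum_add_distrib, hswap]
      ring
    have h3 : ∑ i ∈ S, ∑ j ∈ S.erase i, (ε i * m i j + ε j * m j i)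
        ≤ ∑ i ∈ S, ∑ j ∈ S.erase i, (1:ℝ) := by
      refine Finset.sum_le_sum fun i hi => Finset.sum_le_sum fun j hj => ?_
      have hij : j ≠ i := Finset.ne_of_mem_erase hj
      have := hoff i j (Ne.symm hij)
      have b1 := hbound i j; have b2 := hbound j i
      linarith
    have h4 : (∑ i ∈ S, ∑ j ∈ S.erase i, (1:ℝ)) = S.card * (S.card - 1) := by
      rw [Finset.sum_congr rfl fun i hi => Finset.sum_const (1:ℝ)]
      have : ∀ i ∈ S, ((S.erase i).card • (1:ℝ)) = S.card - 1 := by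
        intro i hi
        rw [Finset.card_erase_of_mem hi, nsmul_eq_mul, mul_one]
        have : 1 ≤ S.card := Finset.card_pos.mpr ⟨i, hi⟩
        push_cast [Nat.cast_sub this]
        ring
      rw [Finset.sum_congr rfl this, Finset.sum_const, nsmul_eq_mul]
    linarith [h2, h3, h4.le, h4.ge]
  have hC : (∑ i ∈ S, ∑ j ∈ univ \ S, ε i * m i j) ≤ S.card * (n - S.card) := by
    have h1 : ∀ i ∈ S, (∑ j ∈ univ \ S, ε i * m i j) ≤ (n - S.card : ℝ) := by
      intro i hi
      calc (∑ j ∈ univ \ S, ε i * m i j) ≤ ∑ j ∈ univ \ S, (1:ℝ) := by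
            refine Finset.sum_le_sum fun j hj => ?_
            have hjS : j ∉ S := (Finset.mem_sdiff.mp hj).2
            have hij : i ≠ j := fun h => hjS (h ▸ hi)
            have := hoff i j hij
            have b1 := hbound i j
            have := abs_nonneg (m j i)
            linarith
      _ = (n - S.card : ℝ) := by
            rw [Finset.sum_const, nsmul_eq_mul, mul_one,
              Finset.card_sdiff_of_subset (Finset.subset_univ S), Finset.card_univ, Fintype.card_fin]
            have hle : S.card ≤ n := by
              simpa using Finset.card_le_univ S
            exact Nat.cast_sub hle
    calc (∑ i ∈ S, ∑ j ∈ univ \ S, ε i * m i j) ≤ ∑ i ∈ S, (n - S.card : ℝ) :=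
          Finset.sum_le_sum h1
    _ = S.card * (n - S.card) := by rw [Finset.sum_const, nsmul_eq_mul]
  have hE : (∑ i ∈ S, ε i * e i) ≤ S.card := by
    calc (∑ i ∈ S, ε i * e i) ≤ ∑ i ∈ S, (1:ℝ) := by
          refine Finset.sum_le_sum fun i _ => ?_
          calc ε i * e i ≤ |ε i * e i| := le_abs_self _
          _ = |e i| := by rw [abs_mul, hεabs]; ring
          _ ≤ 1 := he i
    _ = S.card := by rw [Finset.sum_const, nsmul_eq_mul, mul_one]
  have hkn : (S.card : ℝ) ≤ n := by exact_mod_cast (by simpa using Finset.card_le_univ S)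
  rw [key]
  nlinarith [hW, hC, hE]

lemma converse_main (n : ℕ) (x : Fin n → ℝ)
    (h : ∀ S : Finset (Fin n), ∃ T : Finset (Fin n),
      T.card = S.card ∧ ∑ i ∈ S, |x i| ≤ ∑ j ∈ T, ((j:ℝ) + 1)) :
    ∃ m e, InK n m e ∧ ∀ i, x i = (∑ j ∈ univ.erase i, m i j) + e i := by
  by_contra hc
  have hxP : x ∉ Phi n '' Kset n := by
    rintro ⟨p, hp, hpx⟩
    exact hc ⟨p.1, p.2, hp, fun i => by rw [← hpx]; rfl⟩
  obtain ⟨f, u, hfu, hux⟩ := geometric_hahn_banach_closed_point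
    ((Kset_convex n).linear_image (Phi n))
    ((Kset_compact n).image (Phi n).continuous_of_finiteDimensional).isClosed hxP
  -- the linear functional as a vector
  set lam : Fin n → ℝ := fun i => f (fun j => if i = j then (1:ℝ) else 0) with hlam
  have hf_eq : ∀ y : Fin n → ℝ, f y = ∑ i, y i * lam i := by
    intro y
    conv_lhs => rw [pi_eq_sum_univ y]
    rw [map_sum]
    refine Finset.sum_congr rfl fun i _ => ?_
    rw [ContinuousLinearMap.map_smul, smul_eq_mul]
  set μ : Fin n → ℝ := fun i => |lam i| with hμ
  set σ : Equiv.Perm (Fin n) := Tuple.sort (fun i => -μ i) with hσ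
  have hσmono : ∀ a b : Fin n, a ≤ b → μ (σ b) ≤ μ (σ a) := by
    intro a b hab
    have := Tuple.monotone_sort (fun i => -μ i) hab
    simp only [Function.comp_apply] at this
    simpa using this
  set ε : Fin n → ℝ := fun i => if 0 ≤ lam i then (1:ℝ) else -1 with hε
  have hεabs : ∀ i, |ε i| = 1 := by
    intro i; simp only [hε]; split_ifs <;> simp
  have hεlam : ∀ i, lam i * ε i = μ i := by
    intro i; simp only [hε, hμ]; split_ifs with hi
    · rw [abs_of_nonneg hi]; ring
    · rw [abs_of_neg (lt_of_not_ge hi)]; ring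
  set mstar : Fin n → Fin n → ℝ :=
    fun i j => if σ.symm i < σ.symm j then ε i else 0 with hmstar
  have hmem : ((mstar, ε) : Espace n) ∈ Kset n := by
    refine ⟨fun i => ?_, fun i j hij => ?_, fun i => (hεabs i).le⟩
    · simp [hmstar]
    · show |mstar i j| + |mstar j i| ≤ 1
      rcases lt_trichotomy (σ.symm i) (σ.symm j) with hlt | heq | hgt
      · simp only [hmstar, if_pos hlt, if_neg (asymm hlt)]
        rw [hεabs]; simp
      · exact absurd (σ.symm.injective heq) hij
      · simp only [hmstar, if_neg (asymm hgt), if_pos hgt]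
        rw [hεabs]; simp
  set ystar : Fin n → ℝ := Phi n (mstar, ε) with hystar
  have hylt : f ystar < u := hfu _ ⟨(mstar, ε), hmem, rfl⟩
  -- compute f ystar
  set G : Fin n → ℝ := fun i => μ i + ∑ j, (if σ.symm i < σ.symm j then μ i else 0) with hG
  have hfy : f ystar = ∑ i, G i := by
    rw [hf_eq]
    refine Finset.sum_congr rfl fun i _ => ?_
    have h1 : ystar i = (∑ j ∈ univ.erase i, mstar i j) + ε i := rfl
    have h2 : (∑ j ∈ univ.erase i, mstar i j) = ∑ j, mstar i j :=
      Finset.sum_erase univ (by simp [hmstar])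
    rw [h1, h2, hG]
    show ((∑ j, mstar i j) + ε i) * lam i = _
    rw [add_mul, Finset.sum_mul]
    have h3 : ∀ j, mstar i j * lam i = (if σ.symm i < σ.symm j then μ i else 0) := by
      intro j
      simp only [hmstar, ite_mul, zero_mul]
      rw [mul_comm, hεlam]
    rw [Finset.sum_congr rfl fun j _ => h3 j]
    rw [mul_comm (ε i) (lam i), hεlam]
    ring
  have hGval : ∀ a : Fin n, G (σ a) = μ (σ a) * ((n:ℝ) - (a:ℕ)) := by
    intro a
    have hcount : (∑ j, (if σ.symm (σ a) < σ.symm j then μ (σ a) else 0))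
        = μ (σ a) * ((Finset.Ioi a).card : ℝ) := by
      rw [Equiv.sum_comp σ.symm (fun b => if σ.symm (σ a) < b then μ (σ a) else 0)]
      rw [Equiv.symm_apply_apply]
      rw [Finset.sum_ite, Finset.sum_const_zero, add_zero, Finset.sum_const, nsmul_eq_mul]
      rw [mul_comm]
      congr 2
      rw [← Finset.filter_lt_eq_Ioi]
    rw [hG]
    show μ (σ a) + _ = _
    rw [hcount, Fin.card_Ioi]
    have hcast : ((n - 1 - (a:ℕ) : ℕ) : ℝ) = (n:ℝ) - 1 - (a:ℕ) := by
      have := a.isLt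
      push_cast [Nat.cast_sub (by omega : (a:ℕ) ≤ n - 1), Nat.cast_sub (by omega : 1 ≤ n)]
      ring
    rw [hcast]
    ring
  have hfy2 : f ystar = ∑ a, μ (σ a) * ((n:ℝ) - (a:ℕ)) := by
    rw [hfy, ← Equiv.sum_comp σ G]
    exact Finset.sum_congr rfl fun a _ => hGval a
  -- Abel setup
  set A : ℕ → ℝ := fun k => if h : k < n then μ (σ ⟨k, h⟩) else 0 with hA
  set B : ℕ → ℝ := fun k => if h : k < n then |x (σ ⟨k, h⟩)| else 0 with hB
  set C : ℕ → ℝ := fun k => (n:ℝ) - k with hC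
  have hAmono : ∀ i j, i ≤ j → j < n → A j ≤ A i := by
    intro i j hij hj
    have hi : i < n := lt_of_le_of_lt hij hj
    rw [hA]
    simp only
    rw [dif_pos hj, dif_pos hi]
    exact hσmono ⟨i, hi⟩ ⟨j, hj⟩ hij
  have hApos : ∀ k, k < n → 0 ≤ A k := by
    intro k hk
    rw [hA]; simp only; rw [dif_pos hk]
    exact abs_nonneg _
  have hBC : ∀ m, m ≤ n → ∑ k ∈ range m, B k ≤ ∑ k ∈ range m, C k := by
    intro m hm
    set S : Finset (Fin n) := Finset.map ((Fin.castLEEmb hm).trans σ.toEmbedding) univ with hS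
    have hScard : S.card = m := by
      rw [hS, Finset.card_map, Finset.card_univ, Fintype.card_fin]
    have hSsum : ∑ i ∈ S, |x i| = ∑ a : Fin m, |x (σ (Fin.castLE hm a))| := by
      rw [hS, Finset.sum_map]
      rfl
    have hLHS : ∑ k ∈ range m, B k = ∑ i ∈ S, |x i| := by
      rw [← Fin.sum_univ_eq_sum_range (fun k => B k) m, hSsum]
      refine Finset.sum_congr rfl fun a _ => ?_
      rw [hB]
      simp only
      rw [dif_pos (lt_of_lt_of_le a.isLt hm)]
      rfl
    obtain ⟨T, hT1, hT2⟩ := h S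
    have hT3 : ∑ j ∈ T, ((j:ℝ)+1) ≤ m * n - m * ((m:ℝ)-1)/2 := by
      have := sum_T_le T
      rw [hT1, hScard] at this
      exact this
    have hRHS : ∑ k ∈ range m, C k = m * n - m * ((m:ℝ)-1)/2 := by
      rw [hC]
      exact sumC n m
    rw [hLHS, hRHS]
    exact le_trans hT2 hT3
  have habel := abel_compare n A B C hAmono hApos hBC
  -- final chain
  have hchain : f x < f x := by
    calc f x = ∑ i, x i * lam i := hf_eq x
      _ ≤ ∑ i, μ i * |x i| := by
          refine Finset.sum_le_sum fun i _ => ?_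
          calc x i * lam i ≤ |x i * lam i| := le_abs_self _
            _ = μ i * |x i| := by rw [abs_mul, hμ]; ring
      _ = ∑ a, μ (σ a) * |x (σ a)| := (Equiv.sum_comp σ (fun i => μ i * |x i|)).symm
      _ = ∑ k ∈ range n, A k * B k := by
          rw [← Fin.sum_univ_eq_sum_range (fun k => A k * B k) n]
          refine Finset.sum_congr rfl fun a _ => ?_
          rw [hA, hB]
          simp only
          rw [dif_pos a.isLt, dif_pos a.isLt]
      _ ≤ ∑ k ∈ range n, A k * C k := habel
      _ = ∑ a : Fin n, μ (σ a) * ((n:ℝ) - (a:ℕ)) := by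
          rw [← Fin.sum_univ_eq_sum_range (fun k => A k * C k) n]
          refine Finset.sum_congr rfl fun a _ => ?_
          rw [hA, hC]
          simp only
          rw [dif_pos a.isLt]
      _ = f ystar := hfy2.symm
      _ < u := hylt
      _ < f x := hux
  exact lt_irrefl _ hchain

theorem meanScoreSeqC_iff_weakSubMaj (n : ℕ) (x : Fin n → ℝ) :
    IsMeanScoreSeqC n x ↔
      WeakSubMaj (fun i => |x i|) (fun i : Fin n => (i : ℝ) + 1) := by
  rw [msc_iff_K]
  constructor
  · rintro ⟨m, e, hK, hx⟩ S
    have hk : S.card ≤ n := by simpa using Finset.card_le_univ S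
    obtain ⟨T, hT1, hT2⟩ := top_T hk
    refine ⟨T, hT1, ?_⟩
    rw [hT2]
    exact sum_abs_le hK hx S
  · intro h
    exact converse_main n x (fun S => h S)
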